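/- The pair of functions u(x) = -(3√2/2)·sech²(x/(2β)) and η(x) = -(3/2)·sech²(x/(2β)) satisfies the stationary Boussinesq system β²η'' = η + u²/2 and β²u'' = u(1+η) for all real x, where β > 0. -/

import Mathlib

noncomputable def sech (y : ℝ) : ℝ := 2 / (Real.exp y + Real.exp (-y))

theorem stmt_0 (β : ℝ) (hβ : 0 < β)
    (u η : ℝ → ℝ)
    (hu : u = fun x => -(3 * Real.sqrt 2 / 2) * (sech (x / (2 * β)))^2)
    (hη : η = fun x => -(3 / 2) * (sech (x / (2 * β)))^2) :
    ∀ x : ℝ,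
      β^2 * deriv (deriv η) x = η x + (u x)^2 / 2 ∧
      β^2 * deriv (deriv u) x = u x * (1 + η x) := by
  subst hu hη
  have hβ0 : β ≠ 0 := ne_of_gt hβ
  set S : ℝ → ℝ := fun t => Real.exp (t/(2*β)) + Real.exp (-(t/(2*β))) with hSdef
  set D : ℝ → ℝ := fun t => Real.exp (t/(2*β)) - Real.exp (-(t/(2*β))) with hDdef
  have hSpos : ∀ t : ℝ, 0 < S t := fun t => by positivity
  have hS0 : ∀ t : ℝ, S t ≠ 0 := fun t => ne_of_gt (hSpos t)
  have hid : ∀ t : ℝ, HasDerivAt (fun s : ℝ => s/(2*β)) (1/(2*β)) t := by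
    intro t
    simpa using (hasDerivAt_id t).div_const (2*β)
  have hS : ∀ t : ℝ, HasDerivAt S (D t / (2*β)) t := by
    intro t
    have h2 := (hid t).exp
    have h4 := ((hid t).neg).exp
    have := h2.add h4
    refine this.congr_deriv ?_
    simp [hDdef]
    ring
  have hD : ∀ t : ℝ, HasDerivAt D (S t / (2*β)) t := by
    intro t
    have h2 := (hid t).exp
    have h4 := ((hid t).neg).exp
    have := h2.sub h4
    refine this.congr_deriv ?_
    simp [hSdef]
    ring
  have hfun : ∀ A : ℝ, (fun t => A * sech (t/(2*β))^2) = fun t => A * (4 / (S t)^2) := by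
    intro A
    funext t
    rw [sech, div_pow]
    norm_num
    exact Or.inl rfl
  -- first derivative of A * sech^2
  have hh1 : ∀ (A : ℝ) (t : ℝ), HasDerivAt (fun t => A * sech (t/(2*β))^2)
      (A * ((-4/β) * D t / (S t)^3)) t := by
    intro A t
    rw [hfun]
    have hd := ((hasDerivAt_const t (4:ℝ)).div ((hS t).pow 2)
      (pow_ne_zero 2 (hS0 t))).const_mul A
    refine hd.congr_deriv ?_
    simp only [Pi.pow_apply]
    have hSt := hS0 t
    field_simp
    ring
  have hderiv1 : ∀ A : ℝ, deriv (fun t => A * sech (t/(2*β))^2)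
      = fun t => A * ((-4/β) * D t / (S t)^3) := by
    intro A; funext t; exact (hh1 A t).deriv
  -- second derivative
  have hh2 : ∀ (A : ℝ) (t : ℝ), HasDerivAt (fun t => A * ((-4/β) * D t / (S t)^3))
      (A * ((-2/β^2) * ((S t)^2 - 3*(D t)^2) / (S t)^4)) t := by
    intro A t
    have hnum : HasDerivAt (fun t => (-4/β) * D t) ((-4/β) * (S t / (2*β))) t :=
      (hD t).const_mul _
    have hd := (hnum.div ((hS t).pow 3) (pow_ne_zero 3 (hS0 t))).const_mul A
    refine hd.congr_deriv ?_
    have h2 : D t / (2*β) * (S t)^2 = (S t)^2 * D t / (2*β) := by ring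
    simp only [Pi.pow_apply]
    have hSt := hS0 t
    field_simp
    ring
  have hderiv2 : ∀ (A : ℝ) (t : ℝ), deriv (deriv (fun t => A * sech (t/(2*β))^2)) t
      = A * ((-2/β^2) * ((S t)^2 - 3*(D t)^2) / (S t)^4) := by
    intro A t
    rw [hderiv1]
    exact (hh2 A t).deriv
  intro x
  have hab : Real.exp (x/(2*β)) * Real.exp (-(x/(2*β))) = 1 := by
    rw [← Real.exp_add]; simp
  have hsq : Real.sqrt 2 ^ 2 = 2 := Real.sq_sqrt (by norm_num)
  have hsech : sech (x/(2*β)) ^ 2 = 4 / (S x)^2 := by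
    rw [sech, div_pow]; norm_num
    rfl
  set a := Real.exp (x/(2*β)) with ha
  set b := Real.exp (-(x/(2*β))) with hb
  have hSx : S x = a + b := rfl
  have hDx : D x = a - b := rfl
  have ha0 : a ≠ 0 := Real.exp_ne_zero _
  have hbinv : b = a⁻¹ := by
    field_simp
    linarith [hab]
  have hA : (3 * Real.sqrt 2 / 2)^2 = 9/2 := by
    rw [div_pow, mul_pow, hsq]; norm_num
  constructor
  · rw [hderiv2 (-(3/2)) x]
    simp only [hsech, hSx, hDx, neg_mul, neg_sq, mul_pow, hA, hbinv]
    have hab0 : a + a⁻¹ ≠ 0 := ne_of_gt (by positivity)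
    field_simp
    ring
  · rw [hderiv2 (-(3 * Real.sqrt 2 / 2)) x]
    simp only [hsech, hSx, hDx, hbinv]
    have hab0 : a + a⁻¹ ≠ 0 := ne_of_gt (by positivity)
    field_simp
    ring
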